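/- (Division theorem) Let a ∈ (ℚ_{>0})^n, let F_1,…,F_s be nonzero elements of F = K[[x_1,…,x_n]], and let G be a nonzero element of F. Then there exist H ∈ K[[F_1,…,F_s]] and R ∈ F such that: (1) G = H + R; (2) for every β ∈ Supp(R), the monomial x^β does not belong to K[[M(F_1,a),…,M(F_s,a)]]; (3) ν(H,a) ≥ ν(G,a) and ν(R,a) ≥ ν(G,a) (with the convention ν(0,a) = +∞). -/

import Mathlib

noncomputable section

namespace CanonicalFan

open MvPowerSeries

variable (K : Type*) [Field K] (n : ℕ)

/-- The weight `⟨a, α⟩ = ∑ i, a i * α i` of an exponent `α` with respect to `a`. -/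
def weight (a : Fin n → ℝ) (α : Fin n →₀ ℕ) : ℝ := ∑ i, a i * (α i : ℝ)

/-- The support of a formal power series. -/
def supp (f : MvPowerSeries (Fin n) K) : Set (Fin n →₀ ℕ) :=
  {α | MvPowerSeries.coeff α f ≠ 0}

/-- The `a`-valuation `ν(f,a)`, with the convention `ν(0,a) = +∞`. -/
def nu (a : Fin n → ℝ) (f : MvPowerSeries (Fin n) K) : EReal :=
  sInf ((fun α => ((weight n a α : ℝ) : EReal)) '' supp K n f)

open Classical in
/-- The `a`-initial form `in(f,a)` of a power series. -/
def initialForm (a : Fin n → ℝ) (f : MvPowerSeries (Fin n) K) :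
    MvPowerSeries (Fin n) K :=
  fun α => if ((weight n a α : ℝ) : EReal) = nu K n a f then MvPowerSeries.coeff α f else 0

open Classical in
/-- `exp(f,a)`: the `≺`-maximal element of the support of `in(f,a)`, where `≺` is the
well-ordering `r` (junk value `0` if no maximal element exists). -/
def exponent (r : (Fin n →₀ ℕ) → (Fin n →₀ ℕ) → Prop) (a : Fin n → ℝ)
    (f : MvPowerSeries (Fin n) K) : Fin n →₀ ℕ :=
  if h : ∃ β ∈ supp K n (initialForm K n a f),
      ∀ γ ∈ supp K n (initialForm K n a f), γ = β ∨ r γ β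
  then h.choose else 0

/-- The `a`-leading monomial `M(f,a) = c_{exp(f,a)} x^{exp(f,a)}`. -/
def leadMon (r : (Fin n →₀ ℕ) → (Fin n →₀ ℕ) → Prop) (a : Fin n → ℝ)
    (f : MvPowerSeries (Fin n) K) : MvPowerSeries (Fin n) K :=
  MvPowerSeries.monomial (exponent K n r a f)
    (MvPowerSeries.coeff (exponent K n r a f) f)

/-- The maximal ideal `(x_1, …, x_n)` of `K[[x_1,…,x_n]]`. -/
def mIdeal : Ideal (MvPowerSeries (Fin n) K) :=
  Ideal.span (Set.range (MvPowerSeries.X : Fin n → MvPowerSeries (Fin n) K))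

/-- `K[[S]]`: the smallest `K`-subalgebra of `K[[x_1,…,x_n]]` containing `S` and closed in
the `(x_1,…,x_n)`-adic topology; concretely, the adic closure of `Algebra.adjoin K S`. -/
def closedAdjoin (S : Set (MvPowerSeries (Fin n) K)) :
    Subalgebra K (MvPowerSeries (Fin n) K) where
  carrier := {f | ∀ N : ℕ, ∃ g ∈ Algebra.adjoin K S, f - g ∈ (mIdeal K n) ^ N}
  algebraMap_mem' c N :=
    ⟨algebraMap K _ c, Subalgebra.algebraMap_mem _ c, by simp [Ideal.zero_mem]⟩
  add_mem' {f g} hf hg N := by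
    obtain ⟨p, hp, hfp⟩ := hf N
    obtain ⟨q, hq, hgq⟩ := hg N
    exact ⟨p + q, add_mem hp hq, by simpa [add_sub_add_comm] using Ideal.add_mem _ hfp hgq⟩
  mul_mem' {f g} hf hg N := by
    obtain ⟨p, hp, hfp⟩ := hf N
    obtain ⟨q, hq, hgq⟩ := hg N
    refine ⟨p * q, mul_mem hp hq, ?_⟩
    have h : f * g - p * q = f * (g - q) + (f - p) * q := by ring
    rw [h]
    exact Ideal.add_mem _ (Ideal.mul_mem_left _ _ hgq) (Ideal.mul_mem_right _ _ hfp)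

/-- `exp(A,a) = {exp(f,a) : f ∈ A, f ≠ 0}`. -/
def expSet (r : (Fin n →₀ ℕ) → (Fin n →₀ ℕ) → Prop) (a : Fin n → ℝ)
    (A : Set (MvPowerSeries (Fin n) K)) : Set (Fin n →₀ ℕ) :=
  {β | ∃ f ∈ A, f ≠ 0 ∧ exponent K n r a f = β}

/-- `in(A,a) = K[[in(f,a) : f ∈ A ∖ {0}]]`. -/
def inAlgebra (a : Fin n → ℝ) (A : Set (MvPowerSeries (Fin n) K)) :
    Subalgebra K (MvPowerSeries (Fin n) K) :=
  closedAdjoin K n {g | ∃ f ∈ A, f ≠ 0 ∧ initialForm K n a f = g}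

/-- `M(A,a) = K[[M(f,a) : f ∈ A ∖ {0}]]`. -/
def leadAlgebra (r : (Fin n →₀ ℕ) → (Fin n →₀ ℕ) → Prop) (a : Fin n → ℝ)
    (A : Set (MvPowerSeries (Fin n) K)) : Subalgebra K (MvPowerSeries (Fin n) K) :=
  closedAdjoin K n {g | ∃ f ∈ A, f ≠ 0 ∧ leadMon K n r a f = g}

set_option synthInstance.maxHeartbeats 1000000 in
/-- The length of `F/A` as an `A`-module is finite. -/
def FiniteColength (A : Subalgebra K (MvPowerSeries (Fin n) K)) : Prop :=
  IsFiniteLength A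
    (MvPowerSeries (Fin n) K ⧸ LinearMap.range (Algebra.linearMap A (MvPowerSeries (Fin n) K)))

/-- `{g_1,…,g_r}` is an `a`-canonical basis of `A`. -/
def IsCanonicalBasis (r : (Fin n →₀ ℕ) → (Fin n →₀ ℕ) → Prop) (a : Fin n → ℝ)
    (A : Subalgebra K (MvPowerSeries (Fin n) K)) {m : ℕ}
    (g : Fin m → MvPowerSeries (Fin n) K) : Prop :=
  (∀ i, g i ∈ A ∧ g i ≠ 0) ∧
    leadAlgebra K n r a (A : Set (MvPowerSeries (Fin n) K)) =
      closedAdjoin K n (Set.range fun i => leadMon K n r a (g i))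

/-- `{g_1,…,g_r}` is a minimal `a`-canonical basis of `A`. -/
def IsMinimalCanonicalBasis (r : (Fin n →₀ ℕ) → (Fin n →₀ ℕ) → Prop) (a : Fin n → ℝ)
    (A : Subalgebra K (MvPowerSeries (Fin n) K)) {m : ℕ}
    (g : Fin m → MvPowerSeries (Fin n) K) : Prop :=
  IsCanonicalBasis K n r a A g ∧
    ∀ T : Set (MvPowerSeries (Fin n) K),
      T ⊂ Set.range (fun i => leadMon K n r a (g i)) →
        closedAdjoin K n T ≠ leadAlgebra K n r a (A : Set (MvPowerSeries (Fin n) K))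

/-- `{g_1,…,g_r}` is the `a`-reduced canonical basis of `A`. -/
def IsReducedCanonicalBasis (r : (Fin n →₀ ℕ) → (Fin n →₀ ℕ) → Prop) (a : Fin n → ℝ)
    (A : Subalgebra K (MvPowerSeries (Fin n) K)) {m : ℕ}
    (g : Fin m → MvPowerSeries (Fin n) K) : Prop :=
  IsMinimalCanonicalBasis K n r a A g ∧
    (∀ i, MvPowerSeries.coeff (exponent K n r a (g i)) (g i) = 1) ∧
    ∀ i, ∀ α ∈ supp K n (g i - leadMon K n r a (g i)),
      (MvPowerSeries.monomial α (1 : K)) ∉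
        closedAdjoin K n (Set.range fun j => leadMon K n r a (g j))

/-- A power series is a (nonzero) monomial. -/
def IsMonomial (g : MvPowerSeries (Fin n) K) : Prop :=
  ∃ (α : Fin n →₀ ℕ) (c : K), c ≠ 0 ∧ g = MvPowerSeries.monomial α c

/-! ### Auxiliary machinery for the division theorem -/

lemma mem_closedAdjoin_iff {S : Set (MvPowerSeries (Fin n) K)} {f : MvPowerSeries (Fin n) K} :
    f ∈ closedAdjoin K n S ↔
      ∀ N : ℕ, ∃ g ∈ Algebra.adjoin K S, f - g ∈ (mIdeal K n) ^ N :=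
  Iff.rfl

/-- Total degree of an exponent. -/
def deg (α : Fin n →₀ ℕ) : ℕ := ∑ i, α i

/-- Natural-number weight of an exponent. -/
def Wt (c : Fin n → ℕ) (α : Fin n →₀ ℕ) : ℕ := ∑ i, c i * α i

lemma Wt_add (c : Fin n → ℕ) (α β : Fin n →₀ ℕ) :
    Wt n c (α + β) = Wt n c α + Wt n c β := by
  simp [Wt, Finsupp.add_apply, Nat.mul_add, Finset.sum_add_distrib]

lemma deg_add (α β : Fin n →₀ ℕ) : deg n (α + β) = deg n α + deg n β := by
  simp [deg, Finsupp.add_apply, Finset.sum_add_distrib]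

lemma apply_le_deg (α : Fin n →₀ ℕ) (i : Fin n) : α i ≤ deg n α :=
  Finset.single_le_sum (f := fun j => α j) (fun _ _ => Nat.zero_le _) (Finset.mem_univ i)

lemma deg_le_Wt {c : Fin n → ℕ} (hc : ∀ i, 1 ≤ c i) (α : Fin n →₀ ℕ) :
    deg n α ≤ Wt n c α :=
  Finset.sum_le_sum fun i _ => le_mul_of_one_le_left (Nat.zero_le _) (hc i)

lemma Wt_le_deg (c : Fin n → ℕ) (α : Fin n →₀ ℕ) :
    Wt n c α ≤ (∑ i, c i) * deg n α := by
  rw [Finset.sum_mul]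
  exact Finset.sum_le_sum fun i _ => Nat.mul_le_mul_left _ (apply_le_deg n α i)

lemma deg_eq_zero_iff (α : Fin n →₀ ℕ) : deg n α = 0 ↔ α = 0 := by
  constructor
  · intro h
    ext i
    have := apply_le_deg n α i
    simp only [Finsupp.coe_zero, Pi.zero_apply]
    omega
  · rintro rfl
    simp [deg]

lemma deg_single_one (i : Fin n) : deg n (Finsupp.single i 1) = 1 := by
  simp [deg, Finsupp.single_apply]

lemma finite_Wt_le {c : Fin n → ℕ} (hc : ∀ i, 1 ≤ c i) (m : ℕ) :
    {β : Fin n →₀ ℕ | Wt n c β ≤ m}.Finite := by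
  have hsub : {β : Fin n →₀ ℕ | Wt n c β ≤ m} ⊆
      Set.Icc 0 (Finsupp.equivFunOnFinite.symm fun _ => m) := by
    intro β hβ
    refine ⟨zero_le, ?_⟩
    rw [Finsupp.le_def]
    intro i
    have h1 : β i ≤ Wt n c β := le_trans (apply_le_deg n β i) (deg_le_Wt n hc β)
    simpa using le_trans h1 hβ
  exact (Set.finite_Icc _ _).subset hsub

lemma mem_supp_iff {f : MvPowerSeries (Fin n) K} {β : Fin n →₀ ℕ} :
    β ∈ supp K n f ↔ MvPowerSeries.coeff β f ≠ 0 :=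
  Iff.rfl

lemma supp_nonempty_of_ne_zero {f : MvPowerSeries (Fin n) K} (hf : f ≠ 0) :
    (supp K n f).Nonempty := by
  by_contra h
  rw [Set.not_nonempty_iff_eq_empty, Set.eq_empty_iff_forall_notMem] at h
  refine hf (MvPowerSeries.ext fun β => ?_)
  have := h β
  rw [mem_supp_iff, not_not] at this
  simpa using this

lemma exists_mem_supp_mul {f g : MvPowerSeries (Fin n) K} {β : Fin n →₀ ℕ}
    (hβ : β ∈ supp K n (f * g)) :
    ∃ p q, p + q = β ∧ p ∈ supp K n f ∧ q ∈ supp K n g := by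
  have hβ' : (MvPowerSeries.coeff β) (f * g) ≠ 0 := hβ
  rw [MvPowerSeries.coeff_mul] at hβ'
  obtain ⟨pq, hmem, hne⟩ := Finset.exists_ne_zero_of_sum_ne_zero hβ'
  exact ⟨pq.1, pq.2, Finset.HasAntidiagonal.mem_antidiagonal.mp hmem, left_ne_zero_of_mul hne,
    right_ne_zero_of_mul hne⟩

lemma constantCoeff_eq_zero_of_mem_mIdeal {f : MvPowerSeries (Fin n) K}
    (hf : f ∈ mIdeal K n) : MvPowerSeries.coeff 0 f = 0 := by
  have hle : mIdeal K n ≤ RingHom.ker (MvPowerSeries.constantCoeff) := by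
    rw [mIdeal, Ideal.span_le]
    rintro _ ⟨i, rfl⟩
    simp [RingHom.mem_ker]
  have h0 := hle hf
  rw [RingHom.mem_ker] at h0
  simpa [MvPowerSeries.coeff_zero_eq_constantCoeff] using h0

lemma coeff_eq_zero_of_mem_mIdeal_pow {N : ℕ} {f : MvPowerSeries (Fin n) K}
    (hf : f ∈ (mIdeal K n) ^ N) :
    ∀ β, deg n β < N → MvPowerSeries.coeff β f = 0 := by
  induction N generalizing f with
  | zero => intro β hβ; omega
  | succ N ih =>
    rw [pow_succ] at hf
    refine Submodule.mul_induction_on hf ?_ ?_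
    · intro p hp q hq β hβ
      rw [MvPowerSeries.coeff_mul]
      apply Finset.sum_eq_zero
      rintro ⟨u, v⟩ huv
      rw [Finset.HasAntidiagonal.mem_antidiagonal] at huv
      by_cases hv : v = 0
      · have hqv : MvPowerSeries.coeff v q = 0 := by
          subst hv; exact constantCoeff_eq_zero_of_mem_mIdeal K n hq
        simp [hqv]
      · have hdegv : 1 ≤ deg n v := by
          rcases Nat.eq_zero_or_pos (deg n v) with h | h
          · exact absurd ((deg_eq_zero_iff n v).mp h) hv
          · exact h
        have hdegu : deg n u < N := by
          have h1 : deg n (u + v) = deg n u + deg n v := deg_add n u v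
          rw [huv] at h1
          omega
        have hpu : MvPowerSeries.coeff u p = 0 := ih hp u hdegu
        simp [hpu]
    · intro x y hx hy β hβ
      rw [map_add, hx β hβ, hy β hβ, add_zero]

lemma mem_mIdeal_pow_of_deg :
    ∀ (N : ℕ) (f : MvPowerSeries (Fin n) K),
      (∀ β, deg n β < N → MvPowerSeries.coeff β f = 0) → f ∈ (mIdeal K n) ^ N := by
  intro N
  induction N with
  | zero => intro f _; simp
  | succ N ih =>
    intro f hf
    classical
    set g : Fin n → MvPowerSeries (Fin n) K := fun i =>
      (fun α => if (α + Finsupp.single i 1).support.min = (i : WithTop (Fin n)) then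
          MvPowerSeries.coeff (α + Finsupp.single i 1) f else 0 : (Fin n →₀ ℕ) → K) with hg
    have hgcoeff : ∀ (i) (α : Fin n →₀ ℕ), MvPowerSeries.coeff α (g i) =
        if (α + Finsupp.single i 1).support.min = (i : WithTop (Fin n)) then
          MvPowerSeries.coeff (α + Finsupp.single i 1) f else 0 := by
      intro i α
      rw [hg, MvPowerSeries.coeff_apply]
      rfl
    have hfeq : f = ∑ i, MvPowerSeries.X i * g i := by
      apply MvPowerSeries.ext
      intro β
      rw [map_sum]
      have hterm : ∀ i, MvPowerSeries.coeff β (MvPowerSeries.X i * g i) =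
          if Finsupp.single i 1 ≤ β then
            MvPowerSeries.coeff (β - Finsupp.single i 1) (g i) else 0 := by
        intro i
        rw [MvPowerSeries.X_def, MvPowerSeries.coeff_monomial_mul]
        split <;> simp
      by_cases hβ0 : β = 0
      · subst hβ0
        rw [hf 0 (by simp [deg])]
        symm
        apply Finset.sum_eq_zero
        intro i _
        rw [hterm i, if_neg]
        rw [Finsupp.single_le_iff]
        simp
      · have hne : β.support.Nonempty := Finsupp.support_nonempty_iff.mpr hβ0
        obtain ⟨j, hj⟩ := Finset.min_of_nonempty hne
        have hjmem : j ∈ β.support := Finset.mem_of_min hj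
        have hjle : Finsupp.single j 1 ≤ β := by
          rw [Finsupp.single_le_iff]
          have := Finsupp.mem_support_iff.mp hjmem
          omega
        symm
        rw [Finset.sum_eq_single j]
        · rw [hterm j, if_pos hjle, hgcoeff j, tsub_add_cancel_of_le hjle, hj, if_pos rfl]
        · intro i _ hij
          rw [hterm i]
          split
          · next hle =>
            rw [hgcoeff i, tsub_add_cancel_of_le hle, hj, if_neg]
            intro h
            exact hij (by exact_mod_cast h.symm)
          · rfl
        · intro h
          exact absurd (Finset.mem_univ j) h
    have hgsmall : ∀ i, ∀ β, deg n β < N → MvPowerSeries.coeff β (g i) = 0 := by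
      intro i β hβ
      rw [hgcoeff i]
      split
      · apply hf
        rw [deg_add, deg_single_one]
        omega
      · rfl
    rw [hfeq]
    apply Ideal.sum_mem
    intro i _
    rw [pow_succ']
    exact Ideal.mul_mem_mul (Ideal.subset_span ⟨i, rfl⟩) (ih (g i) (hgsmall i))

lemma exists_weight_data (a : Fin n → ℚ) (ha : ∀ i, 0 < a i) :
    ∃ (c : Fin n → ℕ) (d : ℕ), (∀ i, 1 ≤ c i) ∧ 0 < d ∧
      ∀ α, weight n (fun j => (a j : ℝ)) α = (Wt n c α : ℝ) / d := by
  set d : ℕ := ∏ j, (a j).den with hd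
  have hdpos : 0 < d := Finset.prod_pos fun j _ => (a j).pos
  set c : Fin n → ℕ := fun i => (a i).num.toNat * (d / (a i).den) with hc
  have hdvd : ∀ i, (a i).den ∣ d := fun i => Finset.dvd_prod_of_mem _ (Finset.mem_univ i)
  have hnum : ∀ i, (1 : ℤ) ≤ (a i).num := fun i => Rat.num_pos.mpr (ha i)
  have hckey : ∀ i, ((c i : ℚ)) = a i * d := by
    intro i
    have h1 : ((a i).num.toNat : ℚ) = ((a i).num : ℚ) := by
      have := Int.toNat_of_nonneg (le_trans zero_le_one (hnum i))
      exact_mod_cast congrArg (fun z : ℤ => (z : ℚ)) this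
    have h2 : (((d / (a i).den : ℕ)) : ℚ) = (d : ℚ) / ((a i).den : ℚ) :=
      Nat.cast_div (hdvd i) (by exact_mod_cast (a i).den_nz)
    have hden0 : ((a i).den : ℚ) ≠ 0 := by exact_mod_cast (a i).den_nz
    have h3 : ((a i).den : ℚ) * ((d / (a i).den : ℕ) : ℚ) = (d : ℚ) := by
      exact_mod_cast congrArg (Nat.cast : ℕ → ℚ) (Nat.mul_div_cancel' (hdvd i))
    have h4 : (a i) * ((a i).den : ℚ) = ((a i).num : ℚ) :=
      (mul_comm (a i) _) ▸ ((div_eq_iff hden0).mp (Rat.num_div_den (a i))).symm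
    calc ((c i : ℚ)) = ((a i).num : ℚ) * ((d / (a i).den : ℕ) : ℚ) := by
          rw [hc]; push_cast [h1]; ring
    _ = (a i) * (((a i).den : ℚ) * ((d / (a i).den : ℕ) : ℚ)) := by rw [← h4]; ring
    _ = a i * d := by rw [h3]
  refine ⟨c, d, ?_, hdpos, ?_⟩
  · intro i
    have h1 : 1 ≤ (a i).num.toNat := by
      have := hnum i; omega
    have h2 : 1 ≤ d / (a i).den := by
      rw [Nat.one_le_div_iff (a i).pos]
      exact Nat.le_of_dvd hdpos (hdvd i)
    calc 1 = 1 * 1 := by ring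
    _ ≤ (a i).num.toNat * (d / (a i).den) := Nat.mul_le_mul h1 h2
  · intro α
    have hcR : ∀ i, ((c i : ℝ)) = (a i : ℝ) * d := by
      intro i
      exact_mod_cast congrArg (fun q : ℚ => (q : ℝ)) (hckey i)
    have hdR : (d : ℝ) ≠ 0 := by positivity
    rw [weight, Wt]
    push_cast
    rw [Finset.sum_div]
    apply Finset.sum_congr rfl
    intro i _
    rw [hcR i]
    field_simp

/-- The minimal `Wt`-value on the support of `f` (junk value `0` for `f = 0`). -/
def ordW (c : Fin n → ℕ) (f : MvPowerSeries (Fin n) K) : ℕ :=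
  sInf (Wt n c '' supp K n f)

lemma ordW_le {c : Fin n → ℕ} {f : MvPowerSeries (Fin n) K} {β : Fin n →₀ ℕ}
    (hβ : β ∈ supp K n f) : ordW K n c f ≤ Wt n c β :=
  Nat.sInf_le ⟨β, hβ, rfl⟩

lemma exists_ordW {c : Fin n → ℕ} {f : MvPowerSeries (Fin n) K} (hf : f ≠ 0) :
    ∃ α ∈ supp K n f, Wt n c α = ordW K n c f := by
  obtain ⟨α, hα, h⟩ := Nat.sInf_mem ((supp_nonempty_of_ne_zero K n hf).image (Wt n c))
  exact ⟨α, hα, h⟩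

section WeightData

variable {a : Fin n → ℝ} {c : Fin n → ℕ} {d : ℕ}

lemma nu_eq_ordW (hw : ∀ α, weight n a α = (Wt n c α : ℝ) / d) (hd : 0 < d)
    {f : MvPowerSeries (Fin n) K} (hf : f ≠ 0) :
    nu K n a f = (((ordW K n c f : ℝ) / d : ℝ) : EReal) := by
  have hdR : (0 : ℝ) < d := by exact_mod_cast hd
  obtain ⟨α₀, hα₀, h₀⟩ := exists_ordW K n (c := c) hf
  apply le_antisymm
  · refine sInf_le ⟨α₀, hα₀, ?_⟩
    change ((weight n a α₀ : ℝ) : EReal) = _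
    rw [hw, h₀]
  · apply le_sInf
    rintro x ⟨α, hα, rfl⟩
    change _ ≤ ((weight n a α : ℝ) : EReal)
    rw [hw]
    apply EReal.coe_le_coe_iff.mpr
    apply (div_le_div_iff_of_pos_right hdR).mpr
    exact_mod_cast ordW_le K n hα

lemma le_nu (hw : ∀ α, weight n a α = (Wt n c α : ℝ) / d) (hd : 0 < d)
    {G H : MvPowerSeries (Fin n) K} (hG : G ≠ 0)
    (h : ∀ α ∈ supp K n H, ordW K n c G ≤ Wt n c α) :
    nu K n a G ≤ nu K n a H := by
  have hdR : (0 : ℝ) < d := by exact_mod_cast hd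
  apply le_sInf
  rintro x ⟨α, hα, rfl⟩
  change _ ≤ ((weight n a α : ℝ) : EReal)
  rw [nu_eq_ordW K n hw hd hG, hw]
  apply EReal.coe_le_coe_iff.mpr
  apply (div_le_div_iff_of_pos_right hdR).mpr
  exact_mod_cast h α hα

lemma mem_supp_initialForm_iff (hw : ∀ α, weight n a α = (Wt n c α : ℝ) / d) (hd : 0 < d)
    {f : MvPowerSeries (Fin n) K} (hf : f ≠ 0) {α : Fin n →₀ ℕ} :
    α ∈ supp K n (initialForm K n a f) ↔ α ∈ supp K n f ∧ Wt n c α = ordW K n c f := by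
  have hdR : (0 : ℝ) < d := by exact_mod_cast hd
  have hco : MvPowerSeries.coeff α (initialForm K n a f)
      = if ((weight n a α : ℝ) : EReal) = nu K n a f then MvPowerSeries.coeff α f else 0 := by
    rw [MvPowerSeries.coeff_apply]
    rfl
  have hcond : (((weight n a α : ℝ) : EReal) = nu K n a f) ↔ Wt n c α = ordW K n c f := by
    rw [nu_eq_ordW K n hw hd hf, hw, EReal.coe_eq_coe_iff,
      div_eq_div_iff (ne_of_gt hdR) (ne_of_gt hdR)]
    constructor
    · intro h
      have := mul_right_cancel₀ (ne_of_gt hdR) h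
      exact_mod_cast this
    · intro h
      rw [show ((Wt n c α : ℝ)) = ((ordW K n c f : ℝ)) by exact_mod_cast h]
  rw [mem_supp_iff, hco]
  by_cases h : ((weight n a α : ℝ) : EReal) = nu K n a f
  · rw [if_pos h]
    simp [mem_supp_iff, hcond.mp h]
  · rw [if_neg h]
    constructor
    · intro hx; exact absurd rfl hx
    · rintro ⟨h1, h2⟩
      exact absurd (hcond.mpr h2) h

end WeightData

lemma exists_rmax {r : (Fin n →₀ ℕ) → (Fin n →₀ ℕ) → Prop} (hr : IsWellOrder (Fin n →₀ ℕ) r)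
    {S : Set (Fin n →₀ ℕ)} (hfin : S.Finite) (hne : S.Nonempty) :
    ∃ β ∈ S, ∀ γ ∈ S, γ = β ∨ r γ β := by
  haveI := hr
  have key : ∀ s : Finset (Fin n →₀ ℕ), s.Nonempty → ∃ β ∈ s, ∀ γ ∈ s, γ = β ∨ r γ β := by
    intro s hs
    induction hs using Finset.Nonempty.cons_induction with
    | singleton a => exact ⟨a, Finset.mem_singleton_self a, fun γ hγ =>
        Or.inl (Finset.mem_singleton.mp hγ)⟩
    | cons a s ha hs ih =>
      obtain ⟨b, hb, hmax⟩ := ih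
      rcases trichotomous_of r a b with hab | hab | hab
      · refine ⟨b, Finset.mem_cons_of_mem hb, ?_⟩
        intro γ hγ
        rcases Finset.mem_cons.mp hγ with rfl | hγ'
        · exact Or.inr hab
        · exact hmax γ hγ'
      · refine ⟨b, Finset.mem_cons_of_mem hb, ?_⟩
        intro γ hγ
        rcases Finset.mem_cons.mp hγ with rfl | hγ'
        · exact Or.inl hab
        · exact hmax γ hγ'
      · refine ⟨a, Finset.mem_cons_self a s, ?_⟩
        intro γ hγ
        rcases Finset.mem_cons.mp hγ with rfl | hγ'
        · exact Or.inl rfl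
        · rcases hmax γ hγ' with rfl | hγb
          · exact Or.inr hab
          · exact Or.inr (_root_.trans hγb hab)
  obtain ⟨β, hβ, hmax⟩ := key hfin.toFinset (by rwa [Set.Finite.toFinset_nonempty])
  exact ⟨β, hfin.mem_toFinset.mp hβ, fun γ hγ => hmax γ (hfin.mem_toFinset.mpr hγ)⟩

lemma exponent_spec {r : (Fin n →₀ ℕ) → (Fin n →₀ ℕ) → Prop} (hr : IsWellOrder (Fin n →₀ ℕ) r)
    {a : Fin n → ℝ} {c : Fin n → ℕ} {d : ℕ}
    (hw : ∀ α, weight n a α = (Wt n c α : ℝ) / d) (hd : 0 < d) (hc : ∀ i, 1 ≤ c i)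
    {f : MvPowerSeries (Fin n) K} (hf : f ≠ 0) :
    exponent K n r a f ∈ supp K n f ∧
    Wt n c (exponent K n r a f) = ordW K n c f ∧
    ∀ γ ∈ supp K n f, Wt n c γ = ordW K n c f → γ = exponent K n r a f ∨ r γ (exponent K n r a f) := by
  have hset : supp K n (initialForm K n a f) =
      {α | α ∈ supp K n f ∧ Wt n c α = ordW K n c f} :=
    Set.ext fun α => mem_supp_initialForm_iff K n hw hd hf
  have hfin : (supp K n (initialForm K n a f)).Finite := by
    rw [hset]
    exact (finite_Wt_le n hc (ordW K n c f)).subset fun β hβ => le_of_eq hβ.2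
  have hne : (supp K n (initialForm K n a f)).Nonempty := by
    obtain ⟨α₀, hα₀, h₀⟩ := exists_ordW K n (c := c) hf
    exact ⟨α₀, by rw [hset]; exact ⟨hα₀, h₀⟩⟩
  have hex : ∃ β ∈ supp K n (initialForm K n a f),
      ∀ γ ∈ supp K n (initialForm K n a f), γ = β ∨ r γ β := exists_rmax n hr hfin hne
  have hexp : exponent K n r a f = hex.choose := by
    unfold exponent
    rw [dif_pos hex]
  have hch1 := (mem_supp_initialForm_iff K n hw hd hf).mp hex.choose_spec.1
  have hch2 := hex.choose_spec.2
  refine ⟨by rw [hexp]; exact hch1.1, by rw [hexp]; exact hch1.2, ?_⟩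
  intro γ hγ hWt
  rw [hexp]
  exact hch2 γ ((mem_supp_initialForm_iff K n hw hd hf).mpr ⟨hγ, hWt⟩)

/-- `f` has `r`-maximal minimal-weight exponent `e` (leading exponent). -/
def LeadsAt (c : Fin n → ℕ) (r : (Fin n →₀ ℕ) → (Fin n →₀ ℕ) → Prop)
    (f : MvPowerSeries (Fin n) K) (e : Fin n →₀ ℕ) : Prop :=
  ∀ γ ∈ supp K n f, Wt n c e ≤ Wt n c γ ∧ (Wt n c γ = Wt n c e → γ = e ∨ r γ e)

lemma leadsAt_one (c : Fin n → ℕ) (r : (Fin n →₀ ℕ) → (Fin n →₀ ℕ) → Prop) :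
    LeadsAt K n c r (1 : MvPowerSeries (Fin n) K) 0 := by
  intro γ hγ
  have hγ' : MvPowerSeries.coeff γ (1 : MvPowerSeries (Fin n) K) ≠ 0 := hγ
  have hγ0 : γ = 0 := by
    by_contra h
    rw [MvPowerSeries.coeff_one, if_neg h] at hγ'
    exact hγ' rfl
  subst hγ0
  exact ⟨le_rfl, fun _ => Or.inl rfl⟩

lemma leadsAt_mul {c : Fin n → ℕ} {r : (Fin n →₀ ℕ) → (Fin n →₀ ℕ) → Prop}
    (hr : IsWellOrder (Fin n →₀ ℕ) r)
    (hradd : ∀ α β γ : Fin n →₀ ℕ, r α β → r (α + γ) (β + γ))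
    {f g : MvPowerSeries (Fin n) K} {e e' : Fin n →₀ ℕ}
    (hf : LeadsAt K n c r f e) (hg : LeadsAt K n c r g e') :
    LeadsAt K n c r (f * g) (e + e') ∧
      MvPowerSeries.coeff (e + e') (f * g) =
        MvPowerSeries.coeff e f * MvPowerSeries.coeff e' g := by
  haveI := hr
  have step : ∀ p q : Fin n →₀ ℕ, p ∈ supp K n f → q ∈ supp K n g →
      Wt n c (p + q) = Wt n c (e + e') → (p = e ∧ q = e') ∨ r (p + q) (e + e') := by
    intro p q hp hq hWt
    rw [Wt_add, Wt_add] at hWt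
    have h1 := hf p hp
    have h2 := hg q hq
    have hpe : Wt n c p = Wt n c e := by omega
    have hqe : Wt n c q = Wt n c e' := by omega
    rcases h1.2 hpe with rfl | hpe'
    · rcases h2.2 hqe with rfl | hqe'
      · exact Or.inl ⟨rfl, rfl⟩
      · right
        have h3 := hradd q e' p hqe'
        rwa [add_comm q p, add_comm e' p] at h3
    · right
      have h3 : r (p + q) (e + q) := by
        have := hradd p e q hpe'
        exact this
      rcases h2.2 hqe with rfl | hqe'
      · exact h3
      · have h4 : r (e + q) (e + e') := by
          have := hradd q e' e hqe'
          rwa [add_comm q e, add_comm e' e] at this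
        exact _root_.trans h3 h4
  constructor
  · intro γ hγ
    obtain ⟨p, q, rfl, hp, hq⟩ := exists_mem_supp_mul K n hγ
    have h1 := (hf p hp).1
    have h2 := (hg q hq).1
    constructor
    · rw [Wt_add, Wt_add]; omega
    · intro hWt
      rcases step p q hp hq hWt with ⟨rfl, rfl⟩ | h
      · exact Or.inl rfl
      · exact Or.inr h
  · rw [MvPowerSeries.coeff_mul]
    apply Finset.sum_eq_single_of_mem (e, e') (Finset.HasAntidiagonal.mem_antidiagonal.mpr rfl)
    rintro ⟨p, q⟩ hmem hne
    rw [Finset.HasAntidiagonal.mem_antidiagonal] at hmem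
    by_cases hp : MvPowerSeries.coeff p f = 0
    · rw [hp, zero_mul]
    by_cases hq : MvPowerSeries.coeff q g = 0
    · rw [hq, mul_zero]
    exfalso
    have hWt : Wt n c (p + q) = Wt n c (e + e') := by rw [hmem]
    rcases step p q hp hq hWt with ⟨rfl, rfl⟩ | h
    · exact hne rfl
    · rw [hmem] at h
      exact irrefl _ h

lemma leadsAt_prod {c : Fin n → ℕ} {r : (Fin n →₀ ℕ) → (Fin n →₀ ℕ) → Prop}
    (hr : IsWellOrder (Fin n →₀ ℕ) r)
    (hradd : ∀ α β γ : Fin n →₀ ℕ, r α β → r (α + γ) (β + γ))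
    {m : ℕ} (F : Fin m → MvPowerSeries (Fin n) K) (e : Fin m → (Fin n →₀ ℕ))
    (hF : ∀ i, LeadsAt K n c r (F i) (e i)) (k : Fin m → ℕ) :
    LeadsAt K n c r (∏ i, F i ^ k i) (∑ i, k i • e i) ∧
      MvPowerSeries.coeff (∑ i, k i • e i) (∏ i, F i ^ k i) =
        ∏ i, (MvPowerSeries.coeff (e i) (F i)) ^ k i := by
  have hpow : ∀ (f : MvPowerSeries (Fin n) K) (ee : Fin n →₀ ℕ),
      LeadsAt K n c r f ee → ∀ k : ℕ, LeadsAt K n c r (f ^ k) (k • ee) ∧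
        MvPowerSeries.coeff (k • ee) (f ^ k) = (MvPowerSeries.coeff ee f) ^ k := by
    intro f ee hf k
    induction k with
    | zero =>
      constructor
      · rw [pow_zero, zero_smul]
        exact leadsAt_one K n c r
      · rw [pow_zero, zero_smul, pow_zero]
        exact MvPowerSeries.coeff_zero_one
    | succ k ihk =>
      have hmul := leadsAt_mul K n hr hradd ihk.1 hf
      constructor
      · rw [pow_succ, succ_nsmul]
        exact hmul.1
      · rw [pow_succ, succ_nsmul, hmul.2, ihk.2, pow_succ]
  have main : ∀ t : Finset (Fin m),
      LeadsAt K n c r (∏ i ∈ t, F i ^ k i) (∑ i ∈ t, k i • e i) ∧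
        MvPowerSeries.coeff (∑ i ∈ t, k i • e i) (∏ i ∈ t, F i ^ k i) =
          ∏ i ∈ t, (MvPowerSeries.coeff (e i) (F i)) ^ k i := by
    intro t
    induction t using Finset.induction_on with
    | empty =>
      constructor
      · rw [Finset.prod_empty, Finset.sum_empty]
        exact leadsAt_one K n c r
      · rw [Finset.prod_empty, Finset.sum_empty, Finset.prod_empty]
        exact MvPowerSeries.coeff_zero_one
    | @insert j t hj ih =>
      have h1 := hpow (F j) (e j) (hF j) (k j)
      have h2 := leadsAt_mul K n hr hradd h1.1 ih.1
      constructor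
      · rw [Finset.prod_insert hj, Finset.sum_insert hj]
        exact h2.1
      · rw [Finset.prod_insert hj, Finset.sum_insert hj, Finset.prod_insert hj,
          h2.2, h1.2, ih.2]
  exact main Finset.univ

lemma exists_reducer {r : (Fin n →₀ ℕ) → (Fin n →₀ ℕ) → Prop}
    (hr : IsWellOrder (Fin n →₀ ℕ) r)
    (hradd : ∀ α β γ : Fin n →₀ ℕ, r α β → r (α + γ) (β + γ))
    {a : Fin n → ℝ} {c : Fin n → ℕ} {d : ℕ}
    (hw : ∀ α, weight n a α = (Wt n c α : ℝ) / d) (hd : 0 < d) (hc : ∀ i, 1 ≤ c i)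
    {m : ℕ} (Fs : Fin m → MvPowerSeries (Fin n) K) (hFs : ∀ i, Fs i ≠ 0)
    {β : Fin n →₀ ℕ}
    (hβ : β ∈ AddSubmonoid.closure (Set.range fun i => exponent K n r a (Fs i))) :
    ∃ P : MvPowerSeries (Fin n) K, P ∈ Algebra.adjoin K (Set.range Fs) ∧
      MvPowerSeries.coeff β P = 1 ∧ LeadsAt K n c r P β := by
  classical
  obtain ⟨k, rfl⟩ : ∃ k : Fin m → ℕ, β = ∑ i, k i • exponent K n r a (Fs i) := by
    set e : Fin m → (Fin n →₀ ℕ) := fun i => exponent K n r a (Fs i) with he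
    let T : AddSubmonoid (Fin n →₀ ℕ) :=
      { carrier := {β | ∃ k : Fin m → ℕ, β = ∑ i, k i • e i}
        zero_mem' := ⟨0, by simp⟩
        add_mem' := by
          rintro x y ⟨kx, rfl⟩ ⟨ky, rfl⟩
          exact ⟨kx + ky, by simp [add_smul, Finset.sum_add_distrib]⟩ }
    have hle : AddSubmonoid.closure (Set.range e) ≤ T := by
      apply AddSubmonoid.closure_le.mpr
      rintro _ ⟨i, rfl⟩
      refine ⟨Pi.single i 1, ?_⟩
      rw [Finset.sum_eq_single i]
      · simp
      · intro j _ hji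
        rw [Pi.single_eq_of_ne hji, zero_smul]
      · intro h; exact absurd (Finset.mem_univ i) h
    exact hle hβ
  set e : Fin m → (Fin n →₀ ℕ) := fun i => exponent K n r a (Fs i) with he
  have hlead : ∀ i, LeadsAt K n c r (Fs i) (e i) ∧ MvPowerSeries.coeff (e i) (Fs i) ≠ 0 := by
    intro i
    obtain ⟨h1, h2, h3⟩ := exponent_spec K n hr hw hd hc (hFs i)
    refine ⟨?_, h1⟩
    intro γ hγ
    constructor
    · rw [h2]; exact ordW_le K n hγ
    · intro hWt
      exact h3 γ hγ (by rw [hWt, h2])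
  obtain ⟨hl, hcoeffprod⟩ := leadsAt_prod K n hr hradd Fs e (fun i => (hlead i).1) k
  set C : K := ∏ i, (MvPowerSeries.coeff (e i) (Fs i)) ^ k i with hC
  have hC0 : C ≠ 0 := Finset.prod_ne_zero_iff.mpr fun i _ => pow_ne_zero _ (hlead i).2
  refine ⟨C⁻¹ • ∏ i, Fs i ^ k i, ?_, ?_, ?_⟩
  · exact Subalgebra.smul_mem _ (Subalgebra.prod_mem _ fun i _ =>
      Subalgebra.pow_mem _ (Algebra.subset_adjoin (Set.mem_range_self i)) _) _
  · rw [MvPowerSeries.coeff_smul, hcoeffprod]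
    exact inv_mul_cancel₀ hC0
  · intro γ hγ
    apply hl γ
    have hγ' : MvPowerSeries.coeff γ (C⁻¹ • ∏ i, Fs i ^ k i) ≠ 0 := hγ
    rw [MvPowerSeries.coeff_smul] at hγ'
    exact right_ne_zero_of_mul hγ'

/-- The recursion order: strictly smaller weight, or equal weight and `r`-larger target. -/
def RelW (c : Fin n → ℕ) (r : (Fin n →₀ ℕ) → (Fin n →₀ ℕ) → Prop)
    (β' β : Fin n →₀ ℕ) : Prop :=
  Wt n c β' < Wt n c β ∨ (Wt n c β' = Wt n c β ∧ r β β')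

lemma relW_wf {c : Fin n → ℕ} {r : (Fin n →₀ ℕ) → (Fin n →₀ ℕ) → Prop}
    (hc : ∀ i, 1 ≤ c i) (hr : IsWellOrder (Fin n →₀ ℕ) r) :
    WellFounded (RelW n c r) := by
  classical
  haveI := hr
  have main : ∀ m : ℕ, ∀ β, Wt n c β < m → Acc (RelW n c r) β := by
    intro m
    induction m using Nat.strong_induction_on with
    | _ m ihm =>
      have inner : ∀ k : ℕ, ∀ β, Wt n c β < m →
          (((finite_Wt_le n hc (Wt n c β)).toFinset).filter (fun γ => r β γ)).card ≤ k →
          Acc (RelW n c r) β := by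
        intro k
        induction k with
        | zero =>
          intro β hβ hcard
          constructor
          rintro β' (hlt | ⟨heq, hrβ⟩)
          · exact ihm (Wt n c β) hβ β' hlt
          · exfalso
            have hmem : β' ∈ ((finite_Wt_le n hc (Wt n c β)).toFinset).filter
                (fun γ => r β γ) := by
              rw [Finset.mem_filter, Set.Finite.mem_toFinset]
              exact ⟨Set.mem_setOf_eq ▸ le_of_eq heq, hrβ⟩
            have := Finset.card_pos.mpr ⟨β', hmem⟩
            omega
        | succ k ihk =>
          intro β hβ hcard
          constructor
          rintro β' (hlt | ⟨heq, hrβ⟩)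
          · exact ihm (Wt n c β) hβ β' hlt
          · apply ihk β' (heq ▸ hβ)
            have hsub : (((finite_Wt_le n hc (Wt n c β')).toFinset).filter
                  (fun γ => r β' γ)) ⊂
                (((finite_Wt_le n hc (Wt n c β)).toFinset).filter (fun γ => r β γ)) := by
              constructor
              · intro γ hγ
                rw [Finset.mem_filter, Set.Finite.mem_toFinset] at hγ ⊢
                simp only [Set.mem_setOf_eq] at hγ ⊢
                exact ⟨by omega, _root_.trans hrβ hγ.2⟩
              · intro hcon
                have hmem : β' ∈ ((finite_Wt_le n hc (Wt n c β)).toFinset).filter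
                    (fun γ => r β γ) := by
                  rw [Finset.mem_filter, Set.Finite.mem_toFinset]
                  exact ⟨Set.mem_setOf_eq ▸ le_of_eq heq, hrβ⟩
                have := hcon hmem
                rw [Finset.mem_filter] at this
                exact irrefl _ this.2
            have := Finset.card_lt_card hsub
            omega
      intro β hβ
      exact inner (((finite_Wt_le n hc (Wt n c β)).toFinset).filter (fun γ => r β γ)).card
        β hβ le_rfl
  exact ⟨fun β => main (Wt n c β + 1) β (Nat.lt_succ_self _)⟩

open Classical in
/-- The coefficients of the power-series combination constructed in the division algorithm. -/
noncomputable def hcoef (c : Fin n → ℕ) (r : (Fin n →₀ ℕ) → (Fin n →₀ ℕ) → Prop)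
    (hc : ∀ i, 1 ≤ c i) (hr : IsWellOrder (Fin n →₀ ℕ) r)
    (Γ : AddSubmonoid (Fin n →₀ ℕ)) (P : (Fin n →₀ ℕ) → MvPowerSeries (Fin n) K)
    (G : MvPowerSeries (Fin n) K) : (Fin n →₀ ℕ) → K :=
  (relW_wf n hc hr).fix fun β ih =>
    if β ∈ Γ then
      MvPowerSeries.coeff β G -
        ∑ γ ∈ ((finite_Wt_le n hc (Wt n c β)).toFinset).filter
            (fun γ => γ ∈ Γ ∧ RelW n c r γ β),
          (if hγ : RelW n c r γ β then ih γ hγ else 0) * MvPowerSeries.coeff β (P γ)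
    else 0

open Classical in
lemma hcoef_eq (c : Fin n → ℕ) (r : (Fin n →₀ ℕ) → (Fin n →₀ ℕ) → Prop)
    (hc : ∀ i, 1 ≤ c i) (hr : IsWellOrder (Fin n →₀ ℕ) r)
    (Γ : AddSubmonoid (Fin n →₀ ℕ)) (P : (Fin n →₀ ℕ) → MvPowerSeries (Fin n) K)
    (G : MvPowerSeries (Fin n) K) (β : Fin n →₀ ℕ) :
    hcoef K n c r hc hr Γ P G β =
      if β ∈ Γ then
        MvPowerSeries.coeff β G -
          ∑ γ ∈ ((finite_Wt_le n hc (Wt n c β)).toFinset).filter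
              (fun γ => γ ∈ Γ ∧ RelW n c r γ β),
            hcoef K n c r hc hr Γ P G γ * MvPowerSeries.coeff β (P γ)
      else 0 := by
  conv_lhs => rw [hcoef, WellFounded.fix_eq]
  by_cases hβ : β ∈ Γ
  · rw [if_pos hβ, if_pos hβ]
    congr 1
    refine Finset.sum_congr rfl fun γ hγ => ?_
    rw [dif_pos (Finset.mem_filter.mp hγ).2.2]
    rfl
  · rw [if_neg hβ, if_neg hβ]

open Classical in
/-- The series `H = ∑_{γ ∈ Γ} h γ • P γ`, defined coefficientwise. -/
noncomputable def Hser (c : Fin n → ℕ) (r : (Fin n →₀ ℕ) → (Fin n →₀ ℕ) → Prop)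
    (hc : ∀ i, 1 ≤ c i) (hr : IsWellOrder (Fin n →₀ ℕ) r)
    (Γ : AddSubmonoid (Fin n →₀ ℕ)) (P : (Fin n →₀ ℕ) → MvPowerSeries (Fin n) K)
    (G : MvPowerSeries (Fin n) K) : MvPowerSeries (Fin n) K :=
  fun α =>
    ∑ γ ∈ ((finite_Wt_le n hc (Wt n c α)).toFinset).filter (fun γ => γ ∈ Γ),
      hcoef K n c r hc hr Γ P G γ * MvPowerSeries.coeff α (P γ)

open Classical in
lemma coeff_Hser (c : Fin n → ℕ) (r : (Fin n →₀ ℕ) → (Fin n →₀ ℕ) → Prop)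
    (hc : ∀ i, 1 ≤ c i) (hr : IsWellOrder (Fin n →₀ ℕ) r)
    (Γ : AddSubmonoid (Fin n →₀ ℕ)) (P : (Fin n →₀ ℕ) → MvPowerSeries (Fin n) K)
    (G : MvPowerSeries (Fin n) K) (α : Fin n →₀ ℕ) :
    MvPowerSeries.coeff α (Hser K n c r hc hr Γ P G) =
      ∑ γ ∈ ((finite_Wt_le n hc (Wt n c α)).toFinset).filter (fun γ => γ ∈ Γ),
        hcoef K n c r hc hr Γ P G γ * MvPowerSeries.coeff α (P γ) := by
  rw [MvPowerSeries.coeff_apply]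
  rfl

open Classical in
lemma main_construction (c : Fin n → ℕ) (r : (Fin n →₀ ℕ) → (Fin n →₀ ℕ) → Prop)
    (hc : ∀ i, 1 ≤ c i) (hr : IsWellOrder (Fin n →₀ ℕ) r)
    (Γ : AddSubmonoid (Fin n →₀ ℕ)) (P : (Fin n →₀ ℕ) → MvPowerSeries (Fin n) K)
    (A : Subalgebra K (MvPowerSeries (Fin n) K))
    (hPmem : ∀ β ∈ Γ, P β ∈ A) (hP1 : ∀ β ∈ Γ, MvPowerSeries.coeff β (P β) = 1)
    (hPl : ∀ β ∈ Γ, LeadsAt K n c r (P β) β)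
    (G : MvPowerSeries (Fin n) K) :
    ∃ H : MvPowerSeries (Fin n) K,
      (∀ N : ℕ, ∃ g ∈ A, H - g ∈ (mIdeal K n) ^ N) ∧
      (∀ α ∈ Γ, MvPowerSeries.coeff α H = MvPowerSeries.coeff α G) ∧
      (∀ α ∈ supp K n H, ordW K n c G ≤ Wt n c α) := by
  classical
  haveI := hr
  -- weight bound on supports of the reducers
  have hPsupp : ∀ γ ∈ Γ, ∀ α, MvPowerSeries.coeff α (P γ) ≠ 0 → Wt n c γ ≤ Wt n c α :=
    fun γ hγ α hα => ((hPl γ hγ) α hα).1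
  -- the coefficients have weight at least `ordW G`
  have hlow : ∀ β, hcoef K n c r hc hr Γ P G β ≠ 0 → ordW K n c G ≤ Wt n c β := by
    intro β
    induction β using (relW_wf n hc hr).induction with
    | _ β ih =>
      intro hβ0
      rw [hcoef_eq] at hβ0
      by_cases hβ : β ∈ Γ
      · rw [if_pos hβ] at hβ0
        by_cases hG0 : MvPowerSeries.coeff β G = 0
        · have hsum : (∑ γ ∈ ((finite_Wt_le n hc (Wt n c β)).toFinset).filter
              (fun γ => γ ∈ Γ ∧ RelW n c r γ β),
              hcoef K n c r hc hr Γ P G γ * MvPowerSeries.coeff β (P γ)) ≠ 0 := by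
            intro hs
            rw [hG0, hs, sub_zero] at hβ0
            exact hβ0 rfl
          obtain ⟨γ, hγmem, hγne⟩ := Finset.exists_ne_zero_of_sum_ne_zero hsum
          rw [Finset.mem_filter] at hγmem
          have hrel : RelW n c r γ β := hγmem.2.2
          have h1 : hcoef K n c r hc hr Γ P G γ ≠ 0 := left_ne_zero_of_mul hγne
          have h2 := ih γ hrel h1
          rcases hrel with hlt | ⟨heq, _⟩
          · omega
          · omega
        · exact ordW_le K n hG0
      · rw [if_neg hβ] at hβ0
        exact absurd rfl hβ0
  -- coefficients vanish off Γ
  have hoff : ∀ β, β ∉ Γ → hcoef K n c r hc hr Γ P G β = 0 := by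
    intro β hβ
    rw [hcoef_eq, if_neg hβ]
  refine ⟨Hser K n c r hc hr Γ P G, ?_, ?_, ?_⟩
  · -- approximation by elements of A
    intro N
    refine ⟨∑ γ ∈ ((finite_Wt_le n hc ((∑ i, c i) * N)).toFinset).filter (fun γ => γ ∈ Γ),
      hcoef K n c r hc hr Γ P G γ • P γ, ?_, ?_⟩
    · apply Subalgebra.sum_mem
      intro γ hγ
      rw [Finset.mem_filter] at hγ
      exact Subalgebra.smul_mem _ (hPmem γ hγ.2) _
    · apply mem_mIdeal_pow_of_deg
      intro β hβ
      rw [map_sub, coeff_Hser, map_sum]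
      have hcoeffsmul : ∀ γ, MvPowerSeries.coeff β (hcoef K n c r hc hr Γ P G γ • P γ) =
          hcoef K n c r hc hr Γ P G γ * MvPowerSeries.coeff β (P γ) := fun γ => by
        rw [MvPowerSeries.coeff_smul]
      have hWtβ : Wt n c β ≤ (∑ i, c i) * N := by
        have h1 := Wt_le_deg n c β
        have h2 : deg n β ≤ N := le_of_lt hβ
        calc Wt n c β ≤ (∑ i, c i) * deg n β := h1
        _ ≤ (∑ i, c i) * N := Nat.mul_le_mul_left _ h2
      rw [sub_eq_zero]
      -- both sums agree: extend both to the union, all extra terms vanish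
      set E₁ := ((finite_Wt_le n hc (Wt n c β)).toFinset).filter (fun γ => γ ∈ Γ) with hE₁
      set E₂ := ((finite_Wt_le n hc ((∑ i, c i) * N)).toFinset).filter (fun γ => γ ∈ Γ)
        with hE₂
      have hmem₁ : ∀ γ, γ ∈ E₁ ↔ (Wt n c γ ≤ Wt n c β ∧ γ ∈ Γ) := by
        intro γ
        rw [hE₁, Finset.mem_filter, Set.Finite.mem_toFinset, Set.mem_setOf_eq]
      have hmem₂ : ∀ γ, γ ∈ E₂ ↔ (Wt n c γ ≤ (∑ i, c i) * N ∧ γ ∈ Γ) := by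
        intro γ
        rw [hE₂, Finset.mem_filter, Set.Finite.mem_toFinset, Set.mem_setOf_eq]
      have hsub : E₁ ⊆ E₂ := by
        intro γ hγ
        rw [hmem₁] at hγ
        rw [hmem₂]
        exact ⟨le_trans hγ.1 hWtβ, hγ.2⟩
      rw [Finset.sum_congr rfl (fun γ _ => hcoeffsmul γ)]
      apply Finset.sum_subset hsub
      intro γ hγ₂ hγ₁
      rw [hmem₂] at hγ₂
      rw [hmem₁] at hγ₁
      have hWtγ : ¬ Wt n c γ ≤ Wt n c β := fun hcon => hγ₁ ⟨hcon, hγ₂.2⟩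
      have : MvPowerSeries.coeff β (P γ) = 0 := by
        by_contra hne
        exact hWtγ (hPsupp γ hγ₂.2 β hne)
      rw [this, mul_zero]
  · -- coefficients on Γ agree with G
    intro α hα
    rw [coeff_Hser]
    set E := ((finite_Wt_le n hc (Wt n c α)).toFinset).filter (fun γ => γ ∈ Γ) with hE
    have hmemE : ∀ γ, γ ∈ E ↔ (Wt n c γ ≤ Wt n c α ∧ γ ∈ Γ) := by
      intro γ
      rw [hE, Finset.mem_filter, Set.Finite.mem_toFinset, Set.mem_setOf_eq]
    have hαE : α ∈ E := (hmemE α).mpr ⟨le_rfl, hα⟩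
    rw [← Finset.add_sum_erase E _ hαE]
    set D := ((finite_Wt_le n hc (Wt n c α)).toFinset).filter
      (fun γ => γ ∈ Γ ∧ RelW n c r γ α) with hD
    have hmemD : ∀ γ, γ ∈ D ↔ (Wt n c γ ≤ Wt n c α ∧ (γ ∈ Γ ∧ RelW n c r γ α)) := by
      intro γ
      rw [hD, Finset.mem_filter, Set.Finite.mem_toFinset, Set.mem_setOf_eq]
    have hsub : D ⊆ E.erase α := by
      intro γ hγ
      rw [hmemD] at hγ
      rw [Finset.mem_erase, hmemE]
      refine ⟨?_, hγ.1, hγ.2.1⟩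
      rintro rfl
      rcases hγ.2.2 with hlt | ⟨_, hrγ⟩
      · omega
      · exact irrefl _ hrγ
    have hzero : ∀ γ ∈ E.erase α, γ ∉ D →
        hcoef K n c r hc hr Γ P G γ * MvPowerSeries.coeff α (P γ) = 0 := by
      intro γ hγ hγD
      rw [Finset.mem_erase, hmemE] at hγ
      obtain ⟨hγα, hWtle, hγΓ⟩ := hγ
      have hnrel : ¬ RelW n c r γ α := fun hrel => hγD ((hmemD γ).mpr ⟨hWtle, hγΓ, hrel⟩)
      by_cases hPc : MvPowerSeries.coeff α (P γ) = 0
      · rw [hPc, mul_zero]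
      exfalso
      have hWteq : Wt n c γ = Wt n c α := by
        have := hPsupp γ hγΓ α hPc
        have hnlt : ¬ Wt n c γ < Wt n c α := fun hlt => hnrel (Or.inl hlt)
        omega
      rcases ((hPl γ hγΓ) α hPc).2 (by omega) with rfl | hrαγ
      · exact hγα rfl
      · exact hnrel (Or.inr ⟨hWteq, hrαγ⟩)
    rw [← Finset.sum_subset hsub hzero]
    have heq := hcoef_eq K n c r hc hr Γ P G α
    rw [if_pos hα, ← hD] at heq
    rw [hP1 α hα, mul_one, heq]
    ring
  · -- weight lower bound on the support of H
    intro α hα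
    have hα' : MvPowerSeries.coeff α (Hser K n c r hc hr Γ P G) ≠ 0 := hα
    rw [coeff_Hser] at hα'
    obtain ⟨γ, hγmem, hγne⟩ := Finset.exists_ne_zero_of_sum_ne_zero hα'
    rw [Finset.mem_filter, Set.Finite.mem_toFinset, Set.mem_setOf_eq] at hγmem
    have h1 := hlow γ (left_ne_zero_of_mul hγne)
    omega

lemma supp_adjoin_subset (Γ : AddSubmonoid (Fin n →₀ ℕ)) (T : Set (MvPowerSeries (Fin n) K))
    (hT : ∀ t ∈ T, supp K n t ⊆ (Γ : Set (Fin n →₀ ℕ))) :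
    ∀ g ∈ Algebra.adjoin K T, supp K n g ⊆ (Γ : Set (Fin n →₀ ℕ)) := by
  intro g hg
  induction hg using Algebra.adjoin_induction with
  | mem t ht => exact hT t ht
  | algebraMap v =>
    intro β hβ
    have hβ' : MvPowerSeries.coeff β (algebraMap K (MvPowerSeries (Fin n) K) v) ≠ 0 := hβ
    rw [← MvPowerSeries.c_eq_algebraMap, MvPowerSeries.coeff_C] at hβ'
    by_cases hβ0 : β = 0
    · subst hβ0
      exact AddSubmonoid.zero_mem Γ
    · rw [if_neg hβ0] at hβ'
      exact absurd rfl hβ'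
  | add x y hx hy ihx ihy =>
    intro β hβ
    have hβ' : MvPowerSeries.coeff β (x + y) ≠ 0 := hβ
    rw [map_add] at hβ'
    by_cases h1 : MvPowerSeries.coeff β x = 0
    · have h2 : MvPowerSeries.coeff β y ≠ 0 := by
        intro h2
        rw [h1, h2, add_zero] at hβ'
        exact hβ' rfl
      exact ihy h2
    · exact ihx h1
  | mul x y hx hy ihx ihy =>
    intro β hβ
    obtain ⟨p, q, rfl, hp, hq⟩ := exists_mem_supp_mul K n hβ
    exact AddSubmonoid.add_mem Γ (ihx hp) (ihy hq)

lemma monomial_not_mem_closedAdjoin (Γ : AddSubmonoid (Fin n →₀ ℕ))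
    (T : Set (MvPowerSeries (Fin n) K))
    (hT : ∀ t ∈ T, supp K n t ⊆ (Γ : Set (Fin n →₀ ℕ)))
    {β : Fin n →₀ ℕ} (hβ : β ∉ Γ) :
    (MvPowerSeries.monomial β (1 : K)) ∉ closedAdjoin K n T := by
  intro hmem
  obtain ⟨g, hg, hdiff⟩ := (mem_closedAdjoin_iff K n).mp hmem (deg n β + 1)
  have hcd := coeff_eq_zero_of_mem_mIdeal_pow K n hdiff β (Nat.lt_succ_self _)
  rw [map_sub, MvPowerSeries.coeff_monomial_same, sub_eq_zero] at hcd
  have hsupp : supp K n g ⊆ (Γ : Set (Fin n →₀ ℕ)) := supp_adjoin_subset K n Γ T hT g hg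
  refine hβ (hsupp ?_)
  rw [mem_supp_iff, ← hcd]
  exact one_ne_zero

/-- Division theorem: for positive rational `a`, any nonzero `G` can be
written `G = H + R` with `H ∈ K[[F_1,…,F_s]]`, no monomial of `R` lying in
`K[[M(F_1,a),…,M(F_s,a)]]`, and `ν(H,a), ν(R,a) ≥ ν(G,a)`. -/
theorem division
    (r : (Fin n →₀ ℕ) → (Fin n →₀ ℕ) → Prop) (hr : IsWellOrder (Fin n →₀ ℕ) r)
    (hradd : ∀ α β γ : Fin n →₀ ℕ, r α β → r (α + γ) (β + γ))
    (a : Fin n → ℚ) (ha : ∀ i, 0 < a i)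
    (s : ℕ) (Fs : Fin s → MvPowerSeries (Fin n) K) (hFs : ∀ i, Fs i ≠ 0)
    (G : MvPowerSeries (Fin n) K) (hG : G ≠ 0) :
    ∃ H R : MvPowerSeries (Fin n) K,
      H ∈ closedAdjoin K n (Set.range Fs) ∧
      G = H + R ∧
      (∀ β ∈ supp K n R, (MvPowerSeries.monomial β (1 : K)) ∉
        closedAdjoin K n (Set.range fun i => leadMon K n r (fun j => (a j : ℝ)) (Fs i))) ∧
      nu K n (fun j => (a j : ℝ)) G ≤ nu K n (fun j => (a j : ℝ)) H ∧
      nu K n (fun j => (a j : ℝ)) G ≤ nu K n (fun j => (a j : ℝ)) R := by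
  classical
  haveI := hr
  obtain ⟨c, d, hc, hd, hw⟩ := exists_weight_data n a ha
  set Γ : AddSubmonoid (Fin n →₀ ℕ) :=
    AddSubmonoid.closure (Set.range fun i => exponent K n r (fun j => (a j : ℝ)) (Fs i)) with hΓ
  have hPex : ∀ β, β ∈ Γ → ∃ P : MvPowerSeries (Fin n) K,
      P ∈ Algebra.adjoin K (Set.range Fs) ∧ MvPowerSeries.coeff β P = 1 ∧
        LeadsAt K n c r P β :=
    fun β hβ => exists_reducer K n hr hradd hw hd hc Fs hFs hβ
  set P : (Fin n →₀ ℕ) → MvPowerSeries (Fin n) K := fun β =>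
    if h : β ∈ Γ then (hPex β h).choose else 0 with hP
  have hPeq : ∀ β (hβ : β ∈ Γ), P β = (hPex β hβ).choose := fun β hβ => by
    rw [hP]; exact dif_pos hβ
  have hPmem : ∀ β ∈ Γ, P β ∈ Algebra.adjoin K (Set.range Fs) := fun β hβ => by
    rw [hPeq β hβ]; exact (hPex β hβ).choose_spec.1
  have hP1 : ∀ β ∈ Γ, MvPowerSeries.coeff β (P β) = 1 := fun β hβ => by
    rw [hPeq β hβ]; exact (hPex β hβ).choose_spec.2.1
  have hPl : ∀ β ∈ Γ, LeadsAt K n c r (P β) β := fun β hβ => by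
    rw [hPeq β hβ]; exact (hPex β hβ).choose_spec.2.2
  obtain ⟨H, hHmem, hHΓ, hHsupp⟩ :=
    main_construction K n c r hc hr Γ P (Algebra.adjoin K (Set.range Fs)) hPmem hP1 hPl G
  refine ⟨H, G - H, (mem_closedAdjoin_iff K n).mpr hHmem, by ring, ?_, ?_, ?_⟩
  · intro β hβ
    have hβΓ : β ∉ Γ := by
      intro hmem
      have hzero : MvPowerSeries.coeff β (G - H) = 0 := by
        rw [map_sub, hHΓ β hmem, sub_self]
      exact hβ hzero
    apply monomial_not_mem_closedAdjoin K n Γ _ ?_ hβΓ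
    rintro t ⟨i, rfl⟩
    intro γ hγ
    have hγ' : MvPowerSeries.coeff γ (leadMon K n r (fun j => (a j : ℝ)) (Fs i)) ≠ 0 := hγ
    simp only [leadMon] at hγ'
    rw [MvPowerSeries.coeff_monomial] at hγ'
    by_cases hγe : γ = exponent K n r (fun j => (a j : ℝ)) (Fs i)
    · rw [hγe]
      exact AddSubmonoid.subset_closure ⟨i, rfl⟩
    · rw [if_neg hγe] at hγ'
      exact absurd rfl hγ'
  · exact le_nu K n hw hd hG hHsupp
  · apply le_nu K n hw hd hG
    intro α hα
    have hα' : MvPowerSeries.coeff α (G - H) ≠ 0 := hα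
    rw [map_sub] at hα'
    by_cases h1 : MvPowerSeries.coeff α G = 0
    · have h2 : MvPowerSeries.coeff α H ≠ 0 := by
        intro h2
        rw [h1, h2, sub_self] at hα'
        exact hα' rfl
      exact hHsupp α h2
    · exact ordW_le K n h1

end CanonicalFan
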